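/- For x ∈ B_n, the matching N flips the last bit of (x,0)-type vertices exactly when the first 2n bits form a Dyck word: concretely, for a string of the form (x,0) with x a bitstring of length 2n of weight n, N flips the last bit if and only if x ∈ D_n, and M flips the last bit if and only if x ∈ D_n^-. -/

import Mathlib

/-- Hamming weight. -/
def wt {m : ℕ} (x : Fin m → Bool) : ℕ :=
  (Finset.univ.filter (fun i => x i = true)).card

/-- Surplus of zeros over ones in the prefix of `x` ending at position `j`. -/
def surplus {m : ℕ} (x : Fin m → Bool) (j : Fin m) : ℤ :=
  ((Finset.univ.filter (fun i => i ≤ j ∧ x i = false)).card : ℤ) -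
  ((Finset.univ.filter (fun i => i ≤ j ∧ x i = true)).card : ℤ)

/-- Sorting key for the prefixes ending in 0 (i.e. for positions `j` with
`x j = false`): decreasing surplus of zeros over ones, ties broken by
increasing prefix length.  A smaller key means earlier in the total order. -/
def key {m : ℕ} (x : Fin m → Bool) (j : Fin m) : Lex (ℤ × ℕ) :=
  toLex (-(surplus x j), (j : ℕ))

/-- Flip the bit of `x` at position `j`. -/
def flipBit {m : ℕ} (x : Fin m → Bool) (j : Fin m) : Fin m → Bool :=
  Function.update x j (!(x j))

/-- `IsN x y` : `y` is obtained from `x` by flipping the last bit of the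
*first* prefix ending in 0 in the lexical total order. -/
def IsN {m : ℕ} (x y : Fin m → Bool) : Prop :=
  ∃ j, x j = false ∧ (∀ j', x j' = false → j' ≠ j → key x j < key x j') ∧
    y = flipBit x j

/-- `IsM x y` : `y` is obtained from `x` by flipping the last bit of the
*second* prefix ending in 0 in the lexical total order. -/
def IsM {m : ℕ} (x y : Fin m → Bool) : Prop :=
  ∃ j₀ j, x j₀ = false ∧ x j = false ∧ j ≠ j₀ ∧
    (∀ j', x j' = false → j' ≠ j₀ → key x j₀ < key x j') ∧
    (∀ j', x j' = false → j' ≠ j₀ → j' ≠ j → key x j < key x j') ∧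
    y = flipBit x j

/-- `B_n` : bitstrings of length `2n+1` with exactly `n` ones. -/
def Bn (n : ℕ) : Set (Fin (2 * n + 1) → Bool) := {x | wt x = n}

/-- `B_n'` : bitstrings of length `2n+1` with exactly `n+1` ones. -/
def Bn' (n : ℕ) : Set (Fin (2 * n + 1) → Bool) := {x | wt x = n + 1}

/-- Number of occurrences of the bit `b` among the first `k` positions of `x`. -/
def cnt {m : ℕ} (x : Fin m → Bool) (b : Bool) (k : ℕ) : ℕ :=
  (Finset.univ.filter (fun i : Fin m => (i : ℕ) < k ∧ x i = b)).card

/-- `x` is a Dyck word of length `2n`: it has exactly `n` ones and every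
prefix has at least as many ones as zeros. -/
def IsDyckF (n : ℕ) (x : Fin (2 * n) → Bool) : Prop :=
  wt x = n ∧ ∀ k : ℕ, cnt x false k ≤ cnt x true k

/-- `x ∈ D_n⁻`: `x` has length `2n`, exactly `n` ones, and exactly one prefix
in which the number of ones is strictly smaller than the number of zeros. -/
def IsDyckMinusF (n : ℕ) (x : Fin (2 * n) → Bool) : Prop :=
  wt x = n ∧
  ((Finset.range (2 * n + 1)).filter
    (fun k => cnt x true k < cnt x false k)).card = 1

def sZ {m : ℕ} (x : Fin m → Bool) (k : ℕ) : ℤ :=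
  (cnt x false k : ℤ) - (cnt x true k : ℤ)

lemma cnt_eq_sum {m : ℕ} (x : Fin m → Bool) (b : Bool) (k : ℕ) :
    cnt x b k = ∑ i : Fin m, if (i : ℕ) < k ∧ x i = b then 1 else 0 := by
  rw [cnt, Finset.card_filter]

lemma cnt_zero {m : ℕ} (x : Fin m → Bool) (b : Bool) : cnt x b 0 = 0 := by
  simp [cnt]

lemma cnt_succ {m : ℕ} (x : Fin m → Bool) (b : Bool) (k : ℕ) (hk : k < m) :
    cnt x b (k + 1) = cnt x b k + if x ⟨k, hk⟩ = b then 1 else 0 := by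
  have h2 : (if x ⟨k, hk⟩ = b then 1 else 0) =
      ∑ i : Fin m, if i = ⟨k, hk⟩ ∧ x i = b then 1 else 0 := by
    rw [Finset.sum_eq_single (⟨k, hk⟩ : Fin m)]
    · simp
    · intro i _ hne; simp [hne]
    · simp
  rw [cnt_eq_sum, cnt_eq_sum, h2, ← Finset.sum_add_distrib]
  apply Finset.sum_congr rfl
  intro i _
  rcases lt_trichotomy (i : ℕ) k with h | h | h
  · have hne : (i ≠ ⟨k, hk⟩) := by
      intro e; rw [e] at h; simp at h
    simp [h, Nat.lt_succ_of_lt h, hne]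
  · have he : i = ⟨k, hk⟩ := Fin.ext h
    subst he
    simp [h]
  · have h1 : ¬ ((i : ℕ) < k + 1) := by omega
    have h0 : ¬ ((i : ℕ) < k) := by omega
    have hne : (i ≠ ⟨k, hk⟩) := by
      intro e; rw [e] at h; simp at h
    simp [h1, h0, hne]

lemma cnt_ge {m : ℕ} (x : Fin m → Bool) (b : Bool) (k : ℕ) (hk : m ≤ k) :
    cnt x b k = cnt x b m := by
  unfold cnt
  congr 1
  apply Finset.filter_congr
  intro i _
  have : (i : ℕ) < m := i.isLt
  constructor <;> (intro ⟨_, h2⟩; exact ⟨by omega, h2⟩)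

lemma sZ_zero {m : ℕ} (x : Fin m → Bool) : sZ x 0 = 0 := by
  simp [sZ, cnt_zero]

lemma sZ_succ {m : ℕ} (x : Fin m → Bool) (k : ℕ) (hk : k < m) :
    sZ x (k + 1) = sZ x k + (if x ⟨k, hk⟩ = false then 1 else -1) := by
  unfold sZ
  rw [cnt_succ x false k hk, cnt_succ x true k hk]
  cases h : x ⟨k, hk⟩ <;> simp [h] <;> push_cast <;> ring

/-- The key combinatorial lemma: if a prefix has positive surplus, there is a
zero position realizing (at least) this surplus. -/
lemma exists_zero_pos {m : ℕ} (x : Fin m → Bool) :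
    ∀ k, k ≤ m → 1 ≤ sZ x k → ∃ j : Fin m, x j = false ∧ (j : ℕ) < k ∧
      sZ x k ≤ sZ x ((j : ℕ) + 1) ∧ ((j : ℕ) + 1 = k ∨ sZ x k < sZ x ((j : ℕ) + 1)) := by
  intro k
  induction k with
  | zero => intro _ h; rw [sZ_zero] at h; omega
  | succ k ih =>
    intro hk h
    have hkm : k < m := by omega
    by_cases hb : x ⟨k, hkm⟩ = false
    · exact ⟨⟨k, hkm⟩, hb, by simp, le_refl _, Or.inl rfl⟩
    · have hs : sZ x (k + 1) = sZ x k - 1 := by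
        rw [sZ_succ x k hkm]; simp [hb]; ring
      have h1 : 1 ≤ sZ x k := by omega
      obtain ⟨j, hj0, hjk, hj1, _⟩ := ih (by omega) h1
      exact ⟨j, hj0, by omega, by omega, Or.inr (by omega)⟩

section Main

variable {m : ℕ}

lemma cnt_true_total (x : Fin m → Bool) : cnt x true m = wt x := by
  unfold cnt wt
  congr 1
  apply Finset.filter_congr
  intro i _
  simp [i.isLt]

lemma cnt_add_total (x : Fin m → Bool) : cnt x false m + cnt x true m = m := by
  have h1 : cnt x false m = (Finset.univ.filter (fun i : Fin m => x i = false)).card := by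
    unfold cnt; congr 1; apply Finset.filter_congr; intro i _; simp [i.isLt]
  have h2 : cnt x true m = (Finset.univ.filter (fun i : Fin m => ¬ (x i = false))).card := by
    unfold cnt; congr 1; apply Finset.filter_congr; intro i _; simp [i.isLt]
  rw [h1, h2, Finset.card_filter_add_card_filter_not]
  simp

lemma cnt_snoc (x : Fin m → Bool) (b c : Bool) (k : ℕ) :
    cnt (Fin.snoc x b) c k = cnt x c k + if m < k ∧ b = c then 1 else 0 := by
  rw [cnt_eq_sum (Fin.snoc x b) c k, Fin.sum_univ_castSucc, cnt_eq_sum]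
  congr 1
  · apply Finset.sum_congr rfl
    intro i _
    simp
  · simp

lemma sZ_snoc_le (x : Fin m → Bool) (b : Bool) (k : ℕ) (hk : k ≤ m) :
    sZ (Fin.snoc x b) k = sZ x k := by
  unfold sZ
  rw [cnt_snoc, cnt_snoc]
  simp [show ¬ m < k by omega]

lemma sZ_snoc_top (x : Fin m → Bool) :
    sZ (Fin.snoc x false) (m + 1) = sZ x m + 1 := by
  unfold sZ
  rw [cnt_snoc, cnt_snoc, cnt_ge x false (m+1) (by omega), cnt_ge x true (m+1) (by omega)]
  simp
  push_cast
  ring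

lemma surplus_eq_sZ (x : Fin m → Bool) (j : Fin m) :
    surplus x j = sZ x ((j : ℕ) + 1) := by
  unfold surplus sZ cnt
  congr 3 <;>
  · apply Finset.filter_congr
    intro i _
    rw [Fin.le_def]
    constructor <;> (intro ⟨h1, h2⟩; exact ⟨by omega, h2⟩)

end Main


lemma flip_inj {m : ℕ} (y : Fin m → Bool) (j L : Fin m)
    (h : flipBit y j = flipBit y L) : j = L := by
  by_contra hne
  have h2 := congrFun h j
  unfold flipBit at h2
  rw [Function.update_self, Function.update_of_ne hne] at h2
  cases y j <;> simp at h2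

section MainProof

variable {n : ℕ} {x : Fin (2 * n) → Bool}

lemma hyc (c : Fin (2 * n)) :
    (Fin.snoc x false : Fin (2 * n + 1) → Bool) (Fin.castSucc c) = x c := by
  simp

lemma hyL : (Fin.snoc x false : Fin (2 * n + 1) → Bool) (Fin.last (2 * n)) = false :=
  Fin.snoc_last ..

lemma hstot (hx : wt x = n) : sZ x (2 * n) = 0 := by
  have h1 := cnt_true_total x
  have h2 := cnt_add_total x
  rw [hx] at h1
  unfold sZ
  omega

lemma hkeyL (hx : wt x = n) :
    key (Fin.snoc x false) (Fin.last (2 * n)) = toLex (-1, 2 * n) := by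
  unfold key
  rw [surplus_eq_sZ]
  simp only [Fin.val_last]
  rw [sZ_snoc_top, hstot hx]
  norm_num

lemma hkeyC (c : Fin (2 * n)) :
    key (Fin.snoc x false) (Fin.castSucc c) = toLex (-(sZ x ((c : ℕ) + 1)), (c : ℕ)) := by
  unfold key
  rw [surplus_eq_sZ]
  simp only [Fin.coe_castSucc]
  rw [sZ_snoc_le _ _ _ (by omega)]

lemma hLlt (hx : wt x = n) (c : Fin (2 * n)) :
    key (Fin.snoc x false) (Fin.last (2 * n)) < key (Fin.snoc x false) (Fin.castSucc c) ↔
      sZ x ((c : ℕ) + 1) ≤ 0 := by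
  rw [hkeyL hx, hkeyC, Prod.Lex.lt_iff]
  have := c.isLt
  simp only [ofLex_toLex]
  constructor
  · rintro (h | ⟨h1, h2⟩) <;> omega
  · intro h; left; omega

lemma hltL (hx : wt x = n) (a : Fin (2 * n)) :
    key (Fin.snoc x false) (Fin.castSucc a) < key (Fin.snoc x false) (Fin.last (2 * n)) ↔
      1 ≤ sZ x ((a : ℕ) + 1) := by
  rw [hkeyL hx, hkeyC, Prod.Lex.lt_iff]
  have := a.isLt
  simp only [ofLex_toLex]
  constructor
  · rintro (h | ⟨h1, h2⟩) <;> omega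
  · intro h
    rcases eq_or_lt_of_le h with h' | h'
    · right; constructor <;> omega
    · left; omega

end MainProof

/-- For a vertex of the form `(x,0)` with `x` of length `2n` and weight `n`,
the matching `N` flips the last bit if and only if `x ∈ D_n`, and the matching
`M` flips the last bit if and only if `x ∈ D_n⁻`. -/
theorem lastBit_flip_characterization (n : ℕ) (hn : 1 ≤ n)
    (x : Fin (2 * n) → Bool) (hx : wt x = n) :
    (IsN (Fin.snoc x false) (flipBit (Fin.snoc x false) (Fin.last (2 * n))) ↔
      IsDyckF n x) ∧
    (IsM (Fin.snoc x false) (flipBit (Fin.snoc x false) (Fin.last (2 * n))) ↔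
      IsDyckMinusF n x) := by
  constructor
  · -- N-part
    constructor
    · rintro ⟨j, hj0, hmin, hfe⟩
      have hjL : j = Fin.last (2 * n) := flip_inj _ _ _ hfe.symm
      subst hjL
      refine ⟨hx, ?_⟩
      intro k
      by_contra hcon
      push_neg at hcon
      have h1 : 1 ≤ sZ x k := by unfold sZ; omega
      rcases le_or_gt k (2 * n) with hk | hk
      · obtain ⟨j, hj0', hjk, hjs, -⟩ := exists_zero_pos x k hk h1
        have hj' := hmin (Fin.castSucc j) (by rw [hyc]; exact hj0')
          (Fin.castSucc_lt_last j).ne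
        rw [hLlt hx j] at hj'
        omega
      · have : sZ x k = sZ x (2 * n) := by
          unfold sZ
          rw [cnt_ge x false k (by omega), cnt_ge x true k (by omega)]
        rw [this, hstot hx] at h1
        omega
    · rintro ⟨-, hdy⟩
      refine ⟨Fin.last _, hyL, ?_, rfl⟩
      intro j' hj' hne
      obtain ⟨c, rfl⟩ := Fin.eq_castSucc_of_ne_last hne
      rw [hLlt hx c]
      have := hdy ((c : ℕ) + 1)
      unfold sZ
      omega
  · -- M-part
    constructor
    · rintro ⟨j₀, j, hj₀0, hj0, hne, hmin₀, hmin, hfe⟩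
      have hjL : j = Fin.last (2 * n) := flip_inj _ _ _ hfe.symm
      subst hjL
      obtain ⟨a, rfl⟩ := Fin.eq_castSucc_of_ne_last (Ne.symm hne)
      have hxa : x a = false := by rwa [hyc a] at hj₀0
      have ha1 : 1 ≤ sZ x ((a : ℕ) + 1) := by
        have h := hmin₀ (Fin.last _) hyL hne
        rwa [hltL hx a] at h
      have hothers : ∀ c : Fin (2 * n), x c = false → c ≠ a → sZ x ((c : ℕ) + 1) ≤ 0 := by
        intro c hc hca
        have h := hmin (Fin.castSucc c) (by rw [hyc]; exact hc)
          (fun e => hca (Fin.castSucc_injective _ e)) (Fin.castSucc_lt_last c).ne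
        rwa [hLlt hx c] at h
      have hsa1 : sZ x ((a : ℕ) + 1) = 1 := by
        by_contra hc
        have h2 : 2 ≤ sZ x ((a : ℕ) + 1) := by omega
        have hsucc : sZ x ((a : ℕ) + 1) = sZ x (a : ℕ) + (if x ⟨(a : ℕ), a.isLt⟩ = false then 1 else -1) :=
          sZ_succ x (a : ℕ) a.isLt
        have hsa : 1 ≤ sZ x (a : ℕ) := by
          rcases le_or_gt (sZ x ((a : ℕ) + 1)) (sZ x (a : ℕ) + 1) with h | h
          · omega
          · split at hsucc <;> omega
        obtain ⟨j, hj0', hjk, hjs, -⟩ := exists_zero_pos x (a : ℕ) (le_of_lt a.isLt) hsa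
        have hja : j ≠ a := by
          intro e
          rw [e] at hjk
          omega
        have := hothers j hj0' hja
        omega
      refine ⟨hx, ?_⟩
      have hset : (Finset.range (2 * n + 1)).filter
          (fun k => cnt x true k < cnt x false k) = {(a : ℕ) + 1} := by
        apply Finset.eq_singleton_iff_unique_mem.mpr
        constructor
        · rw [Finset.mem_filter, Finset.mem_range]
          have := a.isLt
          have h := hsa1
          unfold sZ at h
          exact ⟨by omega, by omega⟩
        · intro k hk
          rw [Finset.mem_filter, Finset.mem_range] at hk
          obtain ⟨hk1, hk2⟩ := hk
          have h1 : 1 ≤ sZ x k := by unfold sZ; omega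
          by_contra hne2
          obtain ⟨j, hj0', hjk, hjs, hor⟩ := exists_zero_pos x k (by omega) h1
          have hja : j = a := by
            by_contra hja
            have := hothers j hj0' hja
            omega
          subst hja
          rcases hor with h | h <;> omega
      rw [hset]
      simp
    · rintro ⟨-, hcard⟩
      rw [Finset.card_eq_one] at hcard
      obtain ⟨k₀, hk₀⟩ := hcard
      have hmemk : k₀ ∈ (Finset.range (2 * n + 1)).filter
          (fun k => cnt x true k < cnt x false k) := by
        rw [hk₀]; exact Finset.mem_singleton_self k₀
      rw [Finset.mem_filter, Finset.mem_range] at hmemk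
      obtain ⟨hk₀r, hk₀s⟩ := hmemk
      have hs₀ : 1 ≤ sZ x k₀ := by unfold sZ; omega
      have huniq : ∀ k, k < 2 * n + 1 → 1 ≤ sZ x k → k = k₀ := by
        intro k hk1 hk2
        have : k ∈ (Finset.range (2 * n + 1)).filter
            (fun k => cnt x true k < cnt x false k) := by
          rw [Finset.mem_filter, Finset.mem_range]
          unfold sZ at hk2
          exact ⟨hk1, by omega⟩
        rw [hk₀, Finset.mem_singleton] at this
        exact this
      have hk₀pos : 1 ≤ k₀ := by
        by_contra h
        have : k₀ = 0 := by omega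
        rw [this, sZ_zero] at hs₀
        omega
      have hb : k₀ - 1 < 2 * n := by
        rcases le_or_gt k₀ (2 * n) with h | h
        · omega
        · exfalso
          have : sZ x k₀ = sZ x (2 * n) := by
            unfold sZ
            rw [cnt_ge x false k₀ (by omega), cnt_ge x true k₀ (by omega)]
          rw [this, hstot hx] at hs₀
          omega
      obtain ⟨a, ha⟩ : ∃ a : Fin (2 * n), (a : ℕ) = k₀ - 1 := ⟨⟨k₀ - 1, hb⟩, rfl⟩
      have hk' : k₀ - 1 + 1 = k₀ := by omega
      have hxb : x a = false := by
        cases hbt : x a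
        · rfl
        · exfalso
          have hsucc := sZ_succ x (a : ℕ) a.isLt
          rw [Fin.eta, hbt] at hsucc
          simp only [Bool.true_eq_false, if_false] at hsucc
          rw [ha, hk'] at hsucc
          have h1b : 1 ≤ sZ x (k₀ - 1) := by omega
          have := huniq (k₀ - 1) (by omega) h1b
          omega
      have hsa : 1 ≤ sZ x ((a : ℕ) + 1) := by rw [ha, hk']; exact hs₀
      have hothers : ∀ c : Fin (2 * n), x c = false → c ≠ a → sZ x ((c : ℕ) + 1) ≤ 0 := by
        intro c hc hca
        by_contra h
        push_neg at h
        have := huniq ((c : ℕ) + 1) (by have := c.isLt; omega) h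
        apply hca
        apply Fin.ext
        rw [ha]
        omega
      refine ⟨Fin.castSucc a, Fin.last _, by rw [hyc]; exact hxb, hyL,
        (Fin.castSucc_lt_last a).ne', ?_, ?_, rfl⟩
      · intro j' hj' hnej
        rcases eq_or_ne j' (Fin.last _) with rfl | hjl
        · rw [hltL hx a]; exact hsa
        · obtain ⟨c, rfl⟩ := Fin.eq_castSucc_of_ne_last hjl
          have hc : x c = false := by rwa [hyc c] at hj'
          have hca : c ≠ a := fun e => hnej (by rw [e])
          have h0 := hothers c hc hca
          rw [hkeyC, hkeyC, Prod.Lex.lt_iff]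
          left
          simp only [ofLex_toLex]
          omega
      · intro j' hj' hne₀ hneL
        obtain ⟨c, rfl⟩ := Fin.eq_castSucc_of_ne_last hneL
        have hc : x c = false := by rwa [hyc c] at hj'
        have hca : c ≠ a := fun e => hne₀ (by rw [e])
        rw [hLlt hx c]
        exact hothers c hc hca
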